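/- Let S be the set of positive rationals s such that both U ↦ sU and U ↦ s⁻¹U map 𝒰 into itself. Then S is a subgroup of the multiplicative group ℚ₊^×, and S equals the subgroup generated by the set P of primes p which divide a_k for infinitely many k < 0 and infinitely many k ≥ 0. -/

import Mathlib

open Finset



/-- `a_{-1} a_{-2} ⋯ a_{-k}`. -/
def prodNeg (a : ℤ → ℤ) (k : ℕ) : ℤ := ∏ i ∈ Finset.range k, a (-(i : ℤ) - 1)

/-- `a_0 a_1 ⋯ a_{j-1}`. -/
def prodPos (a : ℤ → ℤ) (j : ℕ) : ℤ := ∏ i ∈ Finset.range j, a (i : ℤ)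

/-- The family `𝒰` of subgroups `(m/n)ℤ` of `ℚ`, where `m` divides `a_0⋯a_j` for some
`j ≥ 0` and `n` divides `a_{-1}⋯a_{-k}` for some `k ≥ 1`. -/
def Ufam (a : ℤ → ℤ) : Set (AddSubgroup ℚ) :=
  {U | ∃ m n : ℕ, 0 < m ∧ 0 < n ∧ (∃ j : ℕ, (m : ℤ) ∣ prodPos a (j + 1)) ∧
    (∃ k : ℕ, 1 ≤ k ∧ (n : ℤ) ∣ prodNeg a k) ∧
    U = AddSubgroup.zmultiples ((m : ℚ) / (n : ℚ))}


/-- Multiplication of a subgroup of `ℚ` by a rational number `s`: the image `sU`. -/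
def smulSub (s : ℚ) (U : AddSubgroup ℚ) : AddSubgroup ℚ :=
  U.map (DistribMulAction.toAddMonoidHom ℚ s)

variable {a : ℤ → ℤ}

lemma prodPos_pos (ha : ∀ i, 2 ≤ a i) (j : ℕ) : 0 < prodPos a j :=
  Finset.prod_pos fun _ _ => lt_of_lt_of_le two_pos (ha _)
lemma prodNeg_pos (ha : ∀ i, 2 ≤ a i) (k : ℕ) : 0 < prodNeg a k :=
  Finset.prod_pos fun _ _ => lt_of_lt_of_le two_pos (ha _)
lemma prodPos_add (j d : ℕ) :
    prodPos a (j + d) = prodPos a j * ∏ t ∈ Finset.range d, a ((j : ℤ) + t) := by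
  unfold prodPos; rw [Finset.prod_range_add]; norm_cast
lemma prodNeg_add (k d : ℕ) :
    prodNeg a (k + d) = prodNeg a k * ∏ t ∈ Finset.range d, a (-((k : ℤ) + t) - 1) := by
  unfold prodNeg; rw [Finset.prod_range_add]; norm_cast
lemma prodPos_dvd_of_le {j j' : ℕ} (h : j ≤ j') : prodPos a j ∣ prodPos a j' := by
  obtain ⟨d, rfl⟩ := Nat.exists_eq_add_of_le h
  rw [prodPos_add]; exact dvd_mul_right _ _
lemma prodNeg_dvd_of_le {k k' : ℕ} (h : k ≤ k') : prodNeg a k ∣ prodNeg a k' := by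
  obtain ⟨d, rfl⟩ := Nat.exists_eq_add_of_le h
  rw [prodNeg_add]; exact dvd_mul_right _ _

lemma val_aux_pos (ha : ∀ i, 2 ≤ a i) {p : ℕ} (hp : p.Prime) {J : ℕ}
    (hJ : ∀ i : ℤ, (J : ℤ) < i → ¬ (p : ℤ) ∣ a i) {M : ℤ} {j' : ℕ}
    (hM : M ∣ prodPos a (j' + 1))
    (hpow : (p : ℤ) ^ ((prodPos a (J + 1)).natAbs.factorization p + 1) ∣ M) : False := by
  set v := (prodPos a (J + 1)).natAbs.factorization p with hv
  have h1 : (p : ℤ) ^ (v + 1) ∣ prodPos a (max j' J + 1) :=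
    (hpow.trans hM).trans (prodPos_dvd_of_le (by omega))
  have hsplit : max j' J + 1 = (J + 1) + (max j' J - J) := by omega
  rw [hsplit, prodPos_add] at h1
  set T := ∏ t ∈ Finset.range (max j' J - J), a (((J:ℕ) + 1 : ℤ) + t) with hT
  have hpT : ¬ (p : ℤ) ∣ T := by
    intro hdvd
    obtain ⟨t, _, hdt⟩ := (Nat.prime_iff_prime_int.mp hp).exists_mem_finset_dvd hdvd
    exact hJ _ (by push_cast; omega) hdt
  have hne : (prodPos a (J + 1)).natAbs ≠ 0 :=
    Int.natAbs_ne_zero.mpr (ne_of_gt (prodPos_pos ha _))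
  have h2 : p ^ (v + 1) ∣ (prodPos a (J + 1)).natAbs * T.natAbs := by
    have := Int.natAbs_dvd_natAbs.mpr h1
    rwa [Int.natAbs_mul, Int.natAbs_pow, Int.natAbs_natCast] at this
  have hcop : Nat.Coprime (p ^ (v + 1)) T.natAbs :=
    Nat.Coprime.pow_left _ ((hp.coprime_iff_not_dvd).mpr (fun h => hpT ((Int.natCast_dvd_natCast.mpr h).trans (Int.natAbs_dvd.mpr dvd_rfl))))
  have h3 : p ^ (v + 1) ∣ (prodPos a (J + 1)).natAbs :=
    (Nat.Coprime.dvd_of_dvd_mul_right hcop h2)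
  exact Nat.pow_succ_factorization_not_dvd hne hp h3

lemma val_aux_neg (ha : ∀ i, 2 ≤ a i) {p : ℕ} (hp : p.Prime) {K : ℕ}
    (hK : ∀ i : ℤ, i < -(K : ℤ) → ¬ (p : ℤ) ∣ a i) {N : ℤ} {k' : ℕ}
    (hN : N ∣ prodNeg a k')
    (hpow : (p : ℤ) ^ ((prodNeg a K).natAbs.factorization p + 1) ∣ N) : False := by
  set v := (prodNeg a K).natAbs.factorization p with hv
  have h1 : (p : ℤ) ^ (v + 1) ∣ prodNeg a (max k' K) :=
    (hpow.trans hN).trans (prodNeg_dvd_of_le (by omega))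
  have hsplit : max k' K = K + (max k' K - K) := by omega
  rw [hsplit, prodNeg_add] at h1
  set T := ∏ t ∈ Finset.range (max k' K - K), a (-((K : ℤ) + t) - 1) with hT
  have hpT : ¬ (p : ℤ) ∣ T := by
    intro hdvd
    obtain ⟨t, _, hdt⟩ := (Nat.prime_iff_prime_int.mp hp).exists_mem_finset_dvd hdvd
    exact hK _ (by omega) hdt
  have hne : (prodNeg a K).natAbs ≠ 0 :=
    Int.natAbs_ne_zero.mpr (ne_of_gt (prodNeg_pos ha _))
  have h2 : p ^ (v + 1) ∣ (prodNeg a K).natAbs * T.natAbs := by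
    have := Int.natAbs_dvd_natAbs.mpr h1
    rwa [Int.natAbs_mul, Int.natAbs_pow, Int.natAbs_natCast] at this
  have hcop : Nat.Coprime (p ^ (v + 1)) T.natAbs :=
    Nat.Coprime.pow_left _ ((hp.coprime_iff_not_dvd).mpr
      (fun h => hpT ((Int.natCast_dvd_natCast.mpr h).trans (Int.natAbs_dvd.mpr dvd_rfl))))
  have h3 : p ^ (v + 1) ∣ (prodNeg a K).natAbs :=
    (Nat.Coprime.dvd_of_dvd_mul_right hcop h2)
  exact Nat.pow_succ_factorization_not_dvd hne hp h3

def Sset (a : ℤ → ℤ) : Set ℚˣ :=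
  {u : ℚˣ | 0 < (u : ℚ) ∧
      (∀ U ∈ Ufam a, smulSub (u : ℚ) U ∈ Ufam a) ∧
      (∀ U ∈ Ufam a, smulSub ((u⁻¹ : ℚˣ) : ℚ) U ∈ Ufam a)}

lemma smulSub_zmultiples (s r : ℚ) :
    smulSub s (AddSubgroup.zmultiples r) = AddSubgroup.zmultiples (s * r) := by
  ext x
  simp only [smulSub, AddSubgroup.mem_map, AddSubgroup.mem_zmultiples_iff,
    DistribMulAction.toAddMonoidHom_apply]
  constructor
  · rintro ⟨y, ⟨k, rfl⟩, rfl⟩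
    exact ⟨k, by simp only [zsmul_eq_mul, smul_eq_mul]; ring⟩
  · rintro ⟨k, rfl⟩
    exact ⟨k • r, ⟨k, rfl⟩, by simp only [zsmul_eq_mul, smul_eq_mul]; ring⟩

lemma zmultiples_inj {r r' : ℚ} (hr : 0 < r) (hr' : 0 < r')
    (h : AddSubgroup.zmultiples r = AddSubgroup.zmultiples r') : r = r' := by
  have h1 : r ∈ AddSubgroup.zmultiples r' := h ▸ AddSubgroup.mem_zmultiples r
  obtain ⟨c, hc⟩ := h1
  have h2 : r' ∈ AddSubgroup.zmultiples r := h.symm ▸ AddSubgroup.mem_zmultiples r'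
  obtain ⟨d, hd⟩ := h2
  simp only [zsmul_eq_mul] at hc hd
  have hr0 : r ≠ 0 := ne_of_gt hr
  have hcd : (c : ℚ) * d = 1 := by
    have h3 : (c : ℚ) * ((d : ℚ) * r) = r := by rw [hd, hc]
    have := mul_right_cancel₀ hr0 (by linarith [h3] : ((c : ℚ) * d) * r = 1 * r)
    linarith [this]
  have hcd' : c * d = 1 := by exact_mod_cast hcd
  have hu : IsUnit c := IsUnit.of_mul_eq_one _ hcd'
  rcases Int.isUnit_iff.mp hu with h1 | h1
  · rw [← hc, h1]; simp
  · exfalso; rw [h1] at hc; push_cast at hc; nlinarith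

lemma bound_pos {p : ℕ} (h : ¬ {k : ℤ | 0 ≤ k ∧ (p : ℤ) ∣ a k}.Infinite) :
    ∃ J : ℕ, ∀ i : ℤ, (J : ℤ) < i → ¬ (p : ℤ) ∣ a i := by
  by_contra hc
  push_neg at hc
  refine h (Set.infinite_of_forall_exists_gt fun c => ?_)
  obtain ⟨i, hi1, hi2⟩ := hc c.toNat
  exact ⟨i, ⟨by omega, hi2⟩, lt_of_le_of_lt (Int.self_le_toNat c) hi1⟩

lemma bound_neg {p : ℕ} (h : ¬ {k : ℤ | k < 0 ∧ (p : ℤ) ∣ a k}.Infinite) :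
    ∃ K : ℕ, 1 ≤ K ∧ ∀ i : ℤ, i < -(K : ℤ) → ¬ (p : ℤ) ∣ a i := by
  by_contra hc
  push_neg at hc
  refine h (Set.infinite_of_forall_exists_lt fun c => ?_)
  obtain ⟨i, hi1, hi2⟩ := hc (max 1 (-c).toNat) (le_max_left _ _)
  refine ⟨i, ⟨by omega, hi2⟩, ?_⟩
  have h1 : (-c) ≤ ((-c).toNat : ℤ) := Int.self_le_toNat _
  have h2 : ((max 1 (-c).toNat : ℕ) : ℤ) ≥ ((-c).toNat : ℤ) := by exact_mod_cast le_max_right _ _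
  omega

lemma num_prime_infinite (ha : ∀ i, 2 ≤ a i) {u : ℚˣ} (hu : u ∈ Sset a) {p : ℕ}
    (hp : p.Prime) (hnum : (p : ℤ) ∣ (u : ℚ).num) :
    {k : ℤ | k < 0 ∧ (p : ℤ) ∣ a k}.Infinite ∧ {k : ℤ | 0 ≤ k ∧ (p : ℤ) ∣ a k}.Infinite := by
  obtain ⟨hq, hS1, hS2⟩ := hu
  set q : ℚ := (u : ℚ) with hqdef
  have hnumpos : 0 < q.num := Rat.num_pos.mpr hq
  have hdenpos : 0 < (q.den : ℤ) := by exact_mod_cast q.pos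
  have hnum0 : (q.num : ℚ) ≠ 0 := by positivity
  have hden0 : (q.den : ℚ) ≠ 0 := by positivity
  have hpden : ¬ p ∣ q.den := by
    intro hd
    have h1 : p ∣ q.num.natAbs := Int.natAbs_dvd_natAbs.mpr (by simpa using hnum)
    have := Nat.dvd_gcd h1 hd
    rw [q.reduced] at this
    exact hp.one_lt.ne' (Nat.dvd_one.mp this)
  constructor
  · -- negative side
    by_contra hinf
    obtain ⟨K, hK1, hK⟩ := bound_neg hinf
    set NK : ℕ := (prodNeg a K).toNat with hNK
    have hNKZ : (NK : ℤ) = prodNeg a K := Int.toNat_of_nonneg (prodNeg_pos ha K).le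
    have hNKpos : 0 < NK := by
      have := prodNeg_pos ha K; omega
    have hU : AddSubgroup.zmultiples ((1 : ℚ) / (NK : ℚ)) ∈ Ufam a :=
      ⟨1, NK, one_pos, hNKpos, ⟨0, one_dvd _⟩, ⟨K, hK1, by rw [hNKZ]⟩, by norm_num⟩
    obtain ⟨m', n', hm', hn', ⟨j', hjd⟩, ⟨k', hk1', hkd⟩, hEq⟩ := hS2 _ hU
    rw [smulSub_zmultiples] at hEq
    have hval : ((u⁻¹ : ℚˣ) : ℚ) = q⁻¹ := Units.val_inv_eq_inv_val u
    have hNKQ0 : (NK : ℚ) ≠ 0 := by positivity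
    have hn'Q0 : (n' : ℚ) ≠ 0 := by positivity
    have hEq2 : q⁻¹ * ((1 : ℚ) / (NK : ℚ)) = (m' : ℚ) / (n' : ℚ) := by
      rw [← hval]
      refine zmultiples_inj ?_ ?_ hEq
      · rw [hval]; positivity
      · positivity
    have hL : (q.den : ℚ) / ((q.num : ℚ) * (NK : ℚ)) = (m' : ℚ) / (n' : ℚ) := by
      rw [← hEq2]
      conv_rhs => rw [show q = (q.num : ℚ) / (q.den : ℚ) from (Rat.num_div_den q).symm]
      rw [inv_div, div_mul_div_comm, mul_one]
    have hcross : (q.den : ℚ) * (n' : ℚ) = (m' : ℚ) * ((q.num : ℚ) * (NK : ℚ)) :=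
      (div_eq_div_iff (by positivity) hn'Q0).mp hL
    have hZ : (q.den : ℤ) * (n' : ℤ) = (m' : ℤ) * (q.num * (NK : ℤ)) := by exact_mod_cast hcross
    set v := (prodNeg a K).natAbs.factorization p with hv
    have hpv : (p : ℤ) ^ v ∣ (NK : ℤ) := by
      rw [hNKZ]
      have h1 : (p : ℕ) ^ v ∣ (prodNeg a K).natAbs := Nat.ordProj_dvd _ _
      have h2 : ((p ^ v : ℕ) : ℤ) ∣ ((prodNeg a K).natAbs : ℤ) := Int.natCast_dvd_natCast.mpr h1
      push_cast at h2
      exact h2.trans ((abs_dvd _ _).mpr dvd_rfl)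
    have hdvdR : (p : ℤ) ^ (v + 1) ∣ (m' : ℤ) * (q.num * (NK : ℤ)) := by
      refine Dvd.dvd.mul_left ?_ _
      rw [pow_succ, mul_comm q.num]
      exact mul_dvd_mul hpv hnum
    have hdvdL : (p : ℤ) ^ (v + 1) ∣ (q.den : ℤ) * (n' : ℤ) := hZ ▸ hdvdR
    have hNdvd : p ^ (v + 1) ∣ q.den * n' := by
      have h2 : ((p ^ (v + 1) : ℕ) : ℤ) ∣ ((q.den * n' : ℕ) : ℤ) := by push_cast; exact hdvdL
      exact_mod_cast h2
    have hcop : Nat.Coprime (p ^ (v + 1)) q.den :=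
      Nat.Coprime.pow_left _ ((hp.coprime_iff_not_dvd).mpr hpden)
    have hfin : p ^ (v + 1) ∣ n' := hcop.dvd_of_dvd_mul_left hNdvd
    refine val_aux_neg ha hp hK hkd ?_
    have h2 : ((p ^ (v + 1) : ℕ) : ℤ) ∣ ((n' : ℕ) : ℤ) := Int.natCast_dvd_natCast.mpr hfin
    push_cast at h2
    exact h2
  · -- positive side
    by_contra hinf
    obtain ⟨J, hJ⟩ := bound_pos hinf
    set MJ : ℕ := (prodPos a (J + 1)).toNat with hMJ
    have hMJZ : (MJ : ℤ) = prodPos a (J + 1) := Int.toNat_of_nonneg (prodPos_pos ha _).le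
    have hMJpos : 0 < MJ := by
      have := prodPos_pos ha (J + 1); omega
    have hU : AddSubgroup.zmultiples ((MJ : ℚ) / ((1 : ℕ) : ℚ)) ∈ Ufam a :=
      ⟨MJ, 1, hMJpos, one_pos, ⟨J, by rw [hMJZ]⟩, ⟨1, le_refl _, one_dvd _⟩, rfl⟩
    obtain ⟨m', n', hm', hn', ⟨j', hjd⟩, ⟨k', hk1', hkd⟩, hEq⟩ := hS1 _ hU
    rw [smulSub_zmultiples] at hEq
    have hn'Q0 : (n' : ℚ) ≠ 0 := by positivity
    have hEq2 : q * ((MJ : ℚ) / ((1 : ℕ) : ℚ)) = (m' : ℚ) / (n' : ℚ) := by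
      refine zmultiples_inj ?_ ?_ hEq
      · have : (0:ℚ) < (MJ : ℚ) := by exact_mod_cast hMJpos
        rw [Nat.cast_one, div_one]; positivity
      · positivity
    have hL : ((q.num : ℚ) * (MJ : ℚ)) / (q.den : ℚ) = (m' : ℚ) / (n' : ℚ) := by
      rw [← hEq2]
      conv_rhs => rw [show q = (q.num : ℚ) / (q.den : ℚ) from (Rat.num_div_den q).symm]
      rw [Nat.cast_one, div_one, div_mul_eq_mul_div]
    have hcross : (q.num : ℚ) * (MJ : ℚ) * (n' : ℚ) = (m' : ℚ) * (q.den : ℚ) :=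
      (div_eq_div_iff hden0 hn'Q0).mp hL
    have hZ : q.num * (MJ : ℤ) * (n' : ℤ) = (m' : ℤ) * (q.den : ℤ) := by exact_mod_cast hcross
    set v := (prodPos a (J + 1)).natAbs.factorization p with hv
    have hpv : (p : ℤ) ^ v ∣ (MJ : ℤ) := by
      rw [hMJZ]
      have h1 : (p : ℕ) ^ v ∣ (prodPos a (J + 1)).natAbs := Nat.ordProj_dvd _ _
      have h2 : ((p ^ v : ℕ) : ℤ) ∣ ((prodPos a (J + 1)).natAbs : ℤ) := Int.natCast_dvd_natCast.mpr h1
      push_cast at h2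
      exact h2.trans ((abs_dvd _ _).mpr dvd_rfl)
    have hdvdR : (p : ℤ) ^ (v + 1) ∣ q.num * (MJ : ℤ) * (n' : ℤ) := by
      refine Dvd.dvd.mul_right ?_ _
      rw [pow_succ, mul_comm ((p:ℤ) ^ v)]
      exact mul_dvd_mul hnum hpv
    have hdvdL : (p : ℤ) ^ (v + 1) ∣ (m' : ℤ) * (q.den : ℤ) := hZ ▸ hdvdR
    have hNdvd : p ^ (v + 1) ∣ m' * q.den := by
      have h2 : ((p ^ (v + 1) : ℕ) : ℤ) ∣ ((m' * q.den : ℕ) : ℤ) := by push_cast; exact hdvdL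
      exact_mod_cast h2
    have hcop : Nat.Coprime (p ^ (v + 1)) q.den :=
      Nat.Coprime.pow_left _ ((hp.coprime_iff_not_dvd).mpr hpden)
    have hfin : p ^ (v + 1) ∣ m' := hcop.dvd_of_dvd_mul_right hNdvd
    refine val_aux_pos ha hp hJ hjd ?_
    have h2 : ((p ^ (v + 1) : ℕ) : ℤ) ∣ ((m' : ℕ) : ℤ) := Int.natCast_dvd_natCast.mpr hfin
    push_cast at h2
    exact h2

lemma Sset_inv {u : ℚˣ} (hu : u ∈ Sset a) : u⁻¹ ∈ Sset a := by
  obtain ⟨h1, h2, h3⟩ := hu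
  refine ⟨?_, h3, ?_⟩
  · rw [Units.val_inv_eq_inv_val]; positivity
  · simpa [inv_inv] using h2

lemma den_prime_infinite (ha : ∀ i, 2 ≤ a i) {u : ℚˣ} (hu : u ∈ Sset a) {p : ℕ}
    (hp : p.Prime) (hden : p ∣ (u : ℚ).den) :
    {k : ℤ | k < 0 ∧ (p : ℤ) ∣ a k}.Infinite ∧ {k : ℤ | 0 ≤ k ∧ (p : ℤ) ∣ a k}.Infinite := by
  refine num_prime_infinite ha (Sset_inv hu) hp ?_
  have hq : 0 < (u : ℚ) := hu.1
  have hnumpos : 0 < (u : ℚ).num := Rat.num_pos.mpr hq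
  have hval : ((u⁻¹ : ℚˣ) : ℚ) = (u : ℚ)⁻¹ := Units.val_inv_eq_inv_val u
  have hinvrep : (u : ℚ)⁻¹ = (((u : ℚ).den : ℤ) : ℚ) / (((u : ℚ).num : ℤ) : ℚ) := by
    conv_lhs => rw [show (u : ℚ) = ((u : ℚ).num : ℚ) / ((u : ℚ).den : ℚ) from
      (Rat.num_div_den _).symm]
    rw [inv_div]
    norm_cast
  have hnum : ((u : ℚ)⁻¹).num = ((u : ℚ).den : ℤ) := by
    rw [hinvrep]
    apply Rat.num_div_eq_of_coprime hnumpos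
    simpa [Int.natAbs_natCast] using (Rat.reduced (u : ℚ)).symm
  rw [hval, hnum]
  exact_mod_cast Int.natCast_dvd_natCast.mpr hden

lemma infinite_pos_exists_gt {P : ℤ → Prop} (h : {k : ℤ | 0 ≤ k ∧ P k}.Infinite) (c : ℤ) :
    ∃ i : ℤ, (0 ≤ i ∧ P i) ∧ c < i := by
  by_contra hc
  push_neg at hc
  exact h (Set.Finite.subset (Set.finite_Icc 0 c) (fun x hx => ⟨hx.1, hc x hx⟩))

lemma infinite_neg_exists_lt {P : ℤ → Prop} (h : {k : ℤ | k < 0 ∧ P k}.Infinite) (c : ℤ) :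
    ∃ i : ℤ, (i < 0 ∧ P i) ∧ i < c := by
  by_contra hc
  push_neg at hc
  exact h (Set.Finite.subset (Set.finite_Icc c 0) (fun x hx => ⟨hc x hx, hx.1.le⟩))

lemma prime_smul_mem (ha : ∀ i, 2 ≤ a i) {p : ℕ} (hp : p.Prime)
    (hpos : {k : ℤ | 0 ≤ k ∧ (p : ℤ) ∣ a k}.Infinite)
    {U : AddSubgroup ℚ} (hU : U ∈ Ufam a) : smulSub (p : ℚ) U ∈ Ufam a := by
  obtain ⟨m, n, hm, hn, ⟨j, hjd⟩, ⟨k, hk1, hkd⟩, rfl⟩ := hU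
  obtain ⟨i, ⟨hi0, hidvd⟩, hgt⟩ := infinite_pos_exists_gt hpos (j : ℤ)
  set j'' : ℕ := i.toNat with hj''
  have hij : (j'' : ℤ) = i := Int.toNat_of_nonneg hi0
  have hjj : j + 1 ≤ j'' := by omega
  refine ⟨p * m, n, Nat.mul_pos hp.pos hm, hn, ⟨j'', ?_⟩, ⟨k, hk1, hkd⟩, ?_⟩
  · have hsplit : j'' + 1 = (j + 1) + (j'' - j) := by omega
    rw [hsplit, prodPos_add]
    have hmem : (j'' - (j + 1)) ∈ Finset.range (j'' - j) := Finset.mem_range.mpr (by omega)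
    have hterm : (p : ℤ) ∣ a (((j + 1 : ℕ) : ℤ) + ((j'' - (j + 1) : ℕ) : ℤ)) := by
      have : (((j + 1 : ℕ) : ℤ) + ((j'' - (j + 1) : ℕ) : ℤ)) = i := by push_cast; omega
      rw [this]; exact hidvd
    have htail : (p : ℤ) ∣ ∏ t ∈ Finset.range (j'' - j), a (((j + 1 : ℕ) : ℤ) + t) :=
      hterm.trans (Finset.dvd_prod_of_mem _ hmem)
    have hcast : ((p * m : ℕ) : ℤ) = (m : ℤ) * (p : ℤ) := by push_cast; ring
    rw [hcast]
    exact mul_dvd_mul hjd htail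
  · rw [smulSub_zmultiples]
    congr 1
    push_cast
    ring

lemma prime_inv_smul_mem (ha : ∀ i, 2 ≤ a i) {p : ℕ} (hp : p.Prime)
    (hneg : {k : ℤ | k < 0 ∧ (p : ℤ) ∣ a k}.Infinite)
    {U : AddSubgroup ℚ} (hU : U ∈ Ufam a) : smulSub ((p : ℚ))⁻¹ U ∈ Ufam a := by
  obtain ⟨m, n, hm, hn, ⟨j, hjd⟩, ⟨k, hk1, hkd⟩, rfl⟩ := hU
  obtain ⟨z, ⟨hz0, hzdvd⟩, hlt⟩ := infinite_neg_exists_lt hneg (-(k : ℤ))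
  set k'' : ℕ := (-z).toNat with hk''
  have hkz : (k'' : ℤ) = -z := Int.toNat_of_nonneg (by omega)
  have hkk : k + 1 ≤ k'' := by omega
  refine ⟨m, p * n, hm, Nat.mul_pos hp.pos hn, ⟨j, hjd⟩, ⟨k'', by omega, ?_⟩, ?_⟩
  · have hsplit : k'' = k + (k'' - k) := by omega
    rw [hsplit, prodNeg_add]
    have hmem : (k'' - (k + 1)) ∈ Finset.range (k'' - k) := Finset.mem_range.mpr (by omega)
    have hterm : (p : ℤ) ∣ a (-(((k : ℕ) : ℤ) + ((k'' - (k + 1) : ℕ) : ℤ)) - 1) := by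
      have : (-(((k : ℕ) : ℤ) + ((k'' - (k + 1) : ℕ) : ℤ)) - 1) = z := by push_cast; omega
      rw [this]; exact hzdvd
    have htail : (p : ℤ) ∣ ∏ t ∈ Finset.range (k'' - k), a (-(((k : ℕ) : ℤ) + t) - 1) :=
      hterm.trans (Finset.dvd_prod_of_mem _ hmem)
    have hcast : ((p * n : ℕ) : ℤ) = (n : ℤ) * (p : ℤ) := by push_cast; ring
    rw [hcast]
    exact mul_dvd_mul hkd htail
  · rw [smulSub_zmultiples]
    congr 1
    have hp0 : ((p : ℚ)) ≠ 0 := by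
      have := hp.pos; positivity
    have hn0 : ((n : ℚ)) ≠ 0 := by positivity
    push_cast
    field_simp

lemma smulSub_one (U : AddSubgroup ℚ) : smulSub 1 U = U := by
  ext x
  simp [smulSub]

lemma smulSub_mul (s t : ℚ) (U : AddSubgroup ℚ) :
    smulSub (s * t) U = smulSub s (smulSub t U) := by
  unfold smulSub
  rw [AddSubgroup.map_map]
  congr 1
  ext x
  simp [mul_assoc]

def Sgroup (a : ℤ → ℤ) : Subgroup ℚˣ where
  carrier := Sset a
  one_mem' := by
    refine ⟨by norm_num, ?_, ?_⟩ <;>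
      · intro U hU
        simpa [smulSub_one] using hU
  mul_mem' := by
    rintro x y ⟨hx1, hx2, hx3⟩ ⟨hy1, hy2, hy3⟩
    refine ⟨by push_cast; exact mul_pos hx1 hy1, ?_, ?_⟩
    · intro U hU
      rw [Units.val_mul, smulSub_mul]
      exact hx2 _ (hy2 _ hU)
    · intro U hU
      rw [mul_inv, Units.val_mul, smulSub_mul]
      exact hx3 _ (hy3 _ hU)
  inv_mem' := Sset_inv

def Pgen (a : ℤ → ℤ) : Set ℚˣ :=
  {u : ℚˣ | ∃ p : ℕ, p.Prime ∧ (u : ℚ) = (p : ℚ) ∧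
      {k : ℤ | k < 0 ∧ (p : ℤ) ∣ a k}.Infinite ∧
      {k : ℤ | 0 ≤ k ∧ (p : ℤ) ∣ a k}.Infinite}

lemma nat_mem_closure : ∀ n : ℕ, n ≠ 0 →
    (∀ p : ℕ, p.Prime → p ∣ n →
      {k : ℤ | k < 0 ∧ (p : ℤ) ∣ a k}.Infinite ∧ {k : ℤ | 0 ≤ k ∧ (p : ℤ) ∣ a k}.Infinite) →
    ∀ w : ℚˣ, (w : ℚ) = (n : ℚ) → w ∈ Subgroup.closure (Pgen a) := by
  intro n
  induction n using Nat.strong_induction_on with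
  | _ n ih =>
    intro hn hdiv w hw
    rcases eq_or_ne n 1 with rfl | hne
    · have hw1 : w = 1 := Units.ext (by simpa using hw)
      rw [hw1]; exact one_mem _
    · set p := n.minFac with hpdef
      have hp : p.Prime := Nat.minFac_prime hne
      have hpd : p ∣ n := Nat.minFac_dvd n
      set m := n / p with hmdef
      have hm : m < n := Nat.div_lt_self (Nat.pos_of_ne_zero hn) hp.one_lt
      have hnm : m * p = n := Nat.div_mul_cancel hpd
      have hm0 : m ≠ 0 := by
        intro h; rw [h] at hnm; simp at hnm; exact hn hnm.symm
      have hp0 : ((p : ℚ)) ≠ 0 := by exact_mod_cast hp.pos.ne'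
      set wp : ℚˣ := Units.mk0 (p : ℚ) hp0 with hwpdef
      have hwp : wp ∈ Subgroup.closure (Pgen a) :=
        Subgroup.subset_closure ⟨p, hp, rfl, (hdiv p hp hpd).1, (hdiv p hp hpd).2⟩
      have hw' : ((w * wp⁻¹ : ℚˣ) : ℚ) = (m : ℚ) := by
        rw [Units.val_mul, Units.val_inv_eq_inv_val, hw]
        have : (n : ℚ) = (m : ℚ) * (p : ℚ) := by exact_mod_cast hnm.symm
        rw [this]
        field_simp
        rfl
      have hmem := ih m hm hm0
        (fun q hq hqd => hdiv q hq (hqd.trans (Nat.div_dvd_of_dvd hpd))) _ hw'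
      have hwe : w = (w * wp⁻¹) * wp := by group
      rw [hwe]
      exact mul_mem hmem hwp

/-- the set `S` of positive rationals `s` such that both `U ↦ sU` and
`U ↦ s⁻¹U` map `𝒰` into itself is a subgroup of the positive rationals (viewed inside
`ℚˣ`), and it equals the subgroup generated by the primes dividing `a_k` for infinitely
many `k < 0` and infinitely many `k ≥ 0`. -/
theorem stmt7 (a : ℤ → ℤ) (ha : ∀ i, 2 ≤ a i) :
    ∃ S : Subgroup ℚˣ,
      (S : Set ℚˣ) = {u : ℚˣ | 0 < (u : ℚ) ∧
          (∀ U ∈ Ufam a, smulSub (u : ℚ) U ∈ Ufam a) ∧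
          (∀ U ∈ Ufam a, smulSub ((u⁻¹ : ℚˣ) : ℚ) U ∈ Ufam a)} ∧
      S = Subgroup.closure {u : ℚˣ | ∃ p : ℕ, p.Prime ∧ (u : ℚ) = (p : ℚ) ∧
          {k : ℤ | k < 0 ∧ (p : ℤ) ∣ a k}.Infinite ∧
          {k : ℤ | 0 ≤ k ∧ (p : ℤ) ∣ a k}.Infinite} := by
  refine ⟨Sgroup a, rfl, ?_⟩
  have hPg : {u : ℚˣ | ∃ p : ℕ, p.Prime ∧ (u : ℚ) = (p : ℚ) ∧
      {k : ℤ | k < 0 ∧ (p : ℤ) ∣ a k}.Infinite ∧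
      {k : ℤ | 0 ≤ k ∧ (p : ℤ) ∣ a k}.Infinite} = Pgen a := rfl
  rw [hPg]
  apply le_antisymm
  · -- Sgroup ≤ closure
    intro u hu
    have hu' : u ∈ Sset a := hu
    have hq : 0 < (u : ℚ) := hu'.1
    have hnumpos : 0 < (u : ℚ).num := Rat.num_pos.mpr hq
    set A : ℕ := (u : ℚ).num.natAbs with hA
    set B : ℕ := (u : ℚ).den with hB
    have hA0 : A ≠ 0 := Int.natAbs_ne_zero.mpr hnumpos.ne'
    have hB0 : B ≠ 0 := (u : ℚ).den_nz
    have hAQ : ((A : ℕ) : ℚ) ≠ 0 := by exact_mod_cast hA0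
    have hBQ : ((B : ℕ) : ℚ) ≠ 0 := by exact_mod_cast hB0
    set wA : ℚˣ := Units.mk0 (A : ℚ) hAQ with hwA
    set wB : ℚˣ := Units.mk0 (B : ℚ) hBQ with hwB
    have hAnum : ((A : ℕ) : ℚ) = ((u : ℚ).num : ℚ) := by
      have : ((A : ℕ) : ℤ) = (u : ℚ).num := Int.natAbs_of_nonneg hnumpos.le
      exact_mod_cast this
    have hue : u = wA * wB⁻¹ := by
      refine Units.ext ?_
      rw [Units.val_mul, Units.val_inv_eq_inv_val]
      show (u : ℚ) = (A : ℚ) * ((B : ℚ))⁻¹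
      rw [hAnum]
      conv_lhs => rw [← Rat.num_div_den (u : ℚ)]
      rw [div_eq_mul_inv]
    have hmemA : wA ∈ Subgroup.closure (Pgen a) := by
      refine nat_mem_closure A hA0 (fun p hp hpd => num_prime_infinite ha hu' hp ?_) wA rfl
      have : ((p : ℤ)).natAbs ∣ (u : ℚ).num.natAbs := by simpa using hpd
      exact Int.natAbs_dvd_natAbs.mp this
    have hmemB : wB ∈ Subgroup.closure (Pgen a) := by
      refine nat_mem_closure B hB0 (fun p hp hpd => den_prime_infinite ha hu' hp hpd) wB rfl
    rw [hue]
    exact mul_mem hmemA (inv_mem hmemB)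
  · -- closure ≤ Sgroup
    rw [Subgroup.closure_le]
    rintro u ⟨p, hp, hval, hneg, hpos⟩
    refine ⟨?_, ?_, ?_⟩
    · rw [hval]
      have := hp.pos
      positivity
    · intro U hU
      rw [hval]
      exact prime_smul_mem ha hp hpos hU
    · intro U hU
      have : ((u⁻¹ : ℚˣ) : ℚ) = ((p : ℚ))⁻¹ := by
        rw [Units.val_inv_eq_inv_val, hval]
      rw [this]
      exact prime_inv_smul_mem ha hp hneg hU
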